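/- Let c₁ > 0, 0 < ρ < (9/10)·c₁, Γ > 0 and a, b ≥ 0. Let ω : ℂ → ℂ be a continuous function such that: (i) for every point ζ ∈ ℂ with Re ζ > Γ one has Re ω(ζ) ≥ (9/10)·c₁ and |Im ω(ζ)| ≤ ρ; (ii) ∫₀^Γ |Re ω(λ)| dλ ≤ a·Γ and ∫₀^Γ |Im ω(λ)| dλ ≤ b·Γ (integrals along the real axis). For τ ∈ ℂ with Re τ > Γ define W(τ) = ∫₀^{Re τ} ω(λ) dλ + i·∫₀^{Im τ} ω(Re τ + i·μ) dμ (integral along the path going first along the real axis from 0 to Re τ, then vertically from Re τ to τ). Then for every τ ∈ ℂ satisfying Re τ ≥ max{Γ, 2·((9/10)·c₁ − ρ)⁻¹·((9/10)·c₁ + ρ + a + b)·Γ}, one has |W(τ)| ≥ ((9/10)·c₁ − ρ)·|τ|/2. -/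

import Mathlib

open Complex intervalIntegral

private lemma re_intInt (f : ℝ → ℂ) (hf : Continuous f) (p q : ℝ) :
    (∫ x in p..q, f x).re = ∫ x in p..q, (f x).re := by
  have := Complex.reCLM.intervalIntegral_comp_comm
    (hf.intervalIntegrable (μ := MeasureTheory.volume) p q)
  simpa [Complex.reCLM_apply] using this.symm

private lemma im_intInt (f : ℝ → ℂ) (hf : Continuous f) (p q : ℝ) :
    (∫ x in p..q, f x).im = ∫ x in p..q, (f x).im := by
  have := Complex.imCLM.intervalIntegral_comp_comm
    (hf.intervalIntegrable (μ := MeasureTheory.volume) p q)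
  simpa [Complex.imCLM_apply] using this.symm

private lemma const_le_intInt {f : ℝ → ℝ} (hf : Continuous f) {p q c : ℝ} (hpq : p ≤ q)
    (h : ∀ x ∈ Set.Ioc p q, c ≤ f x) : c * (q - p) ≤ ∫ x in p..q, f x := by
  rw [intervalIntegral.integral_of_le hpq]
  calc c * (q - p) = ∫ _ in Set.Ioc p q, c := by
        rw [MeasureTheory.setIntegral_const]
        simp [Real.volume_Ioc, ENNReal.toReal_ofReal (sub_nonneg.2 hpq), mul_comm, hpq]
    _ ≤ ∫ x in Set.Ioc p q, f x :=
        MeasureTheory.setIntegral_mono_on (MeasureTheory.integrableOn_const (by simp) (by simp))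
          (hf.integrableOn_Ioc) measurableSet_Ioc h

set_option maxHeartbeats 1000000 in
/-- Key integral estimate in Lemma 3: along the L-shaped path (real segment `[0, Re τ]`
followed by the vertical segment from `Re τ` to `τ`), the integral of a frequency `ω`
whose real part is bounded below by `(9/10)c₁` and whose imaginary part is at most `ρ`
for `Re ζ > Γ` grows at least linearly in `|τ|` once `Re τ` is large enough. -/
theorem stmt_1 (c₁ ρ Γ a b : ℝ) (hc₁ : 0 < c₁) (hρ₀ : 0 < ρ) (hρ : ρ < (9 / 10) * c₁)
    (hΓ : 0 < Γ) (ha : 0 ≤ a) (hb : 0 ≤ b)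
    (ω : ℂ → ℂ) (hω : Continuous ω)
    (hre : ∀ ζ : ℂ, ζ.re > Γ → (9 / 10) * c₁ ≤ (ω ζ).re ∧ |(ω ζ).im| ≤ ρ)
    (hinta : ∫ l in (0:ℝ)..Γ, |(ω (l : ℂ)).re| ≤ a * Γ)
    (hintb : ∫ l in (0:ℝ)..Γ, |(ω (l : ℂ)).im| ≤ b * Γ) :
    ∀ τ : ℂ,
      max Γ (2 * ((9 / 10) * c₁ - ρ)⁻¹ * ((9 / 10) * c₁ + ρ + a + b) * Γ) ≤ τ.re →
      ((9 / 10) * c₁ - ρ) * ‖τ‖ / 2 ≤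
        ‖(∫ l in (0:ℝ)..τ.re, ω (l : ℂ)) +
          Complex.I * ∫ m in (0:ℝ)..τ.im, ω ((τ.re : ℂ) + (m : ℂ) * Complex.I)‖ := by
  intro τ hτ
  set c : ℝ := (9 / 10) * c₁ with hc
  have hκ : 0 < c - ρ := sub_pos.2 hρ
  have hc0 : 0 < c := lt_trans hρ₀ hρ
  set T : ℝ := τ.re with hTdef
  set s : ℝ := τ.im with hsdef
  have hT1 : Γ ≤ T := le_trans (le_max_left _ _) hτ
  have hT2 : 2 * (c - ρ)⁻¹ * (c + ρ + a + b) * Γ ≤ T := le_trans (le_max_right _ _) hτ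
  clear_value c T s
  have hM : (c + ρ + a + b) * Γ ≤ (c - ρ) * T / 2 := by
    have h4 : 2 * (c - ρ)⁻¹ * (c + ρ + a + b) * Γ * (c - ρ) ≤ T * (c - ρ) :=
      mul_le_mul_of_nonneg_right hT2 hκ.le
    have h5 : 2 * (c - ρ)⁻¹ * (c + ρ + a + b) * Γ * (c - ρ) = 2 * ((c + ρ + a + b) * Γ) := by
      field_simp
    rw [h5] at h4
    linarith
  have hΓT : Γ < T := by
    by_contra hcon
    push_neg at hcon
    nlinarith [mul_pos hρ₀ hΓ, mul_pos hc0 hΓ, mul_nonneg ha hΓ.le, mul_nonneg hb hΓ.le,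
      mul_le_mul_of_nonneg_left hcon hκ.le]
  have hT0 : 0 < T := lt_trans hΓ hΓT
  -- continuity
  have contH : Continuous fun l : ℝ => ω l := hω.comp Complex.continuous_ofReal
  have contV : Continuous fun m : ℝ => ω ((T : ℂ) + (m : ℂ) * Complex.I) := by
    exact hω.comp (by continuity)
  -- components
  set H : ℂ := ∫ l in (0:ℝ)..T, ω l with hH
  set V : ℂ := ∫ m in (0:ℝ)..s, ω ((T : ℂ) + (m : ℂ) * Complex.I) with hV
  set W : ℂ := H + Complex.I * V with hW
  have hWre : W.re = H.re - V.im := by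
    rw [hW]
    simp only [Complex.add_re, Complex.mul_re, Complex.I_re, Complex.I_im]
    ring
  have hWim : W.im = H.im + V.re := by
    rw [hW]
    simp only [Complex.add_im, Complex.mul_im, Complex.I_re, Complex.I_im]
    ring
  -- split the horizontal integral
  have hsplitRe : (∫ l in (0:ℝ)..Γ, (ω l).re) + (∫ l in Γ..T, (ω l).re)
      = ∫ l in (0:ℝ)..T, (ω l).re :=
    intervalIntegral.integral_add_adjacent_intervals
      ((Complex.continuous_re.comp contH).intervalIntegrable _ _)
      ((Complex.continuous_re.comp contH).intervalIntegrable _ _)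
  have hsplitIm : (∫ l in (0:ℝ)..Γ, (ω l).im) + (∫ l in Γ..T, (ω l).im)
      = ∫ l in (0:ℝ)..T, (ω l).im :=
    intervalIntegral.integral_add_adjacent_intervals
      ((Complex.continuous_im.comp contH).intervalIntegrable _ _)
      ((Complex.continuous_im.comp contH).intervalIntegrable _ _)
  -- bounds for the horizontal pieces
  have hA₁ : |∫ l in (0:ℝ)..Γ, (ω l).re| ≤ a * Γ :=
    le_trans (intervalIntegral.abs_integral_le_integral_abs hΓ.le) hinta
  have hB₁ : |∫ l in (0:ℝ)..Γ, (ω l).im| ≤ b * Γ :=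
    le_trans (intervalIntegral.abs_integral_le_integral_abs hΓ.le) hintb
  have hA₂ : c * (T - Γ) ≤ ∫ l in Γ..T, (ω l).re := by
    refine const_le_intInt (Complex.continuous_re.comp contH) hΓT.le fun x hx => ?_
    exact (hre x (by simpa using hx.1)).1
  have hB₂ : |∫ l in Γ..T, (ω l).im| ≤ ρ * (T - Γ) := by
    have h := intervalIntegral.norm_integral_le_of_norm_le_const
      (f := fun l : ℝ => (ω l).im) (a := Γ) (b := T) (C := ρ) ?_
    · rwa [Real.norm_eq_abs, _root_.abs_of_nonneg (sub_nonneg.2 hΓT.le)] at h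
    · intro x hx
      rw [Set.uIoc_of_le hΓT.le] at hx
      exact (hre x (by simpa using hx.1)).2
  -- bounds for the vertical pieces
  have hVbound : ∀ m : ℝ, c ≤ (ω ((T : ℂ) + (m : ℂ) * Complex.I)).re ∧
      |(ω ((T : ℂ) + (m : ℂ) * Complex.I)).im| ≤ ρ := fun m =>
    hre _ (by simpa using hΓT)
  set u : ℝ := |s| with hu
  have hu0 : 0 ≤ u := abs_nonneg s
  have hu2 : u ^ 2 = s ^ 2 := sq_abs s
  have hus : s ≤ u := le_abs_self s
  have hus' : -u ≤ s := neg_abs_le s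
  have hQ : |V.im| ≤ ρ * u := by
    rw [hV, im_intInt _ contV, hu]
    have h := intervalIntegral.norm_integral_le_of_norm_le_const
      (f := fun m : ℝ => (ω ((T : ℂ) + (m : ℂ) * Complex.I)).im) (a := 0) (b := s) (C := ρ)
      (fun x _ => (hVbound x).2)
    simpa [Real.norm_eq_abs] using h
  have hP : c * u ^ 2 ≤ V.re * s := by
    rw [hu2, hV, re_intInt _ contV]
    rcases le_total 0 s with hs0 | hs0
    · have h1 : c * (s - 0) ≤ ∫ m in (0:ℝ)..s, (ω ((T : ℂ) + (m : ℂ) * Complex.I)).re :=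
        const_le_intInt (Complex.continuous_re.comp contV) hs0 fun x _ => (hVbound x).1
      nlinarith [mul_le_mul_of_nonneg_right h1 hs0]
    · have h1 : c * (0 - s) ≤ ∫ m in s..(0:ℝ), (ω ((T : ℂ) + (m : ℂ) * Complex.I)).re :=
        const_le_intInt (Complex.continuous_re.comp contV) hs0 fun x _ => (hVbound x).1
      rw [intervalIntegral.integral_symm]
      nlinarith [mul_le_mul_of_nonpos_right h1 hs0]
  have hHre : c * (T - Γ) - a * Γ ≤ H.re := by
    rw [hH, re_intInt _ contH, ← hsplitRe]
    have := abs_le.1 hA₁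
    linarith
  have hHim : |H.im| ≤ b * Γ + ρ * (T - Γ) := by
    rw [hH, im_intInt _ contH, ← hsplitIm]
    calc |(∫ l in (0:ℝ)..Γ, (ω l).im) + ∫ l in Γ..T, (ω l).im|
        ≤ |∫ l in (0:ℝ)..Γ, (ω l).im| + |∫ l in Γ..T, (ω l).im| := abs_add_le _ _
      _ ≤ b * Γ + ρ * (T - Γ) := add_le_add hB₁ hB₂
  clear_value u H V W
  -- key lower bound for Re (W * conj τ)
  have hkey : (c - ρ) * (T ^ 2 + u ^ 2) / 2 ≤ W.re * T + W.im * s := by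
    have e1 : V.im * T ≤ ρ * u * T :=
      mul_le_mul_of_nonneg_right (le_trans (le_abs_self _) hQ) hT0.le
    have e2 : -((b * Γ + ρ * (T - Γ)) * u) ≤ H.im * s := by
      have h0 : |H.im * s| ≤ (b * Γ + ρ * (T - Γ)) * u := by
        rw [abs_mul, ← hu]
        exact mul_le_mul_of_nonneg_right hHim hu0
      linarith [neg_abs_le (H.im * s), (abs_le.1 h0).1]
    have e3 : (c * (T - Γ) - a * Γ) * T ≤ H.re * T :=
      mul_le_mul_of_nonneg_right hHre hT0.le
    have hTu : Γ * (c + a) * T + Γ * b * u ≤ (c - ρ) * (T ^ 2 + u ^ 2) / 2 := by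
      rcases le_total u T with hut | hut
      · linarith [mul_le_mul_of_nonneg_right hM hT0.le,
          mul_nonneg (mul_nonneg hΓ.le hb) (sub_nonneg.2 hut),
          mul_nonneg (mul_nonneg hΓ.le hρ₀.le) hT0.le,
          mul_nonneg hκ.le (sq_nonneg u)]
      · linarith [mul_le_mul_of_nonneg_right hM hu0,
          mul_nonneg (mul_nonneg hΓ.le (by positivity : (0:ℝ) ≤ c + a)) (sub_nonneg.2 hut),
          mul_nonneg hκ.le (sq_nonneg (T - u)),
          mul_nonneg (mul_nonneg hΓ.le hρ₀.le) hu0,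
          mul_nonneg hκ.le (mul_nonneg hT0.le hu0)]
    have hρuT : 2 * ρ * u * T ≤ ρ * (T ^ 2 + u ^ 2) := by
      nlinarith [mul_nonneg hρ₀.le (sq_nonneg (T - u))]
    have hρΓu : 0 ≤ ρ * (Γ * u) := mul_nonneg hρ₀.le (mul_nonneg hΓ.le hu0)
    rw [hWre, hWim]
    linarith [hP, e1, e2, e3, hTu, hρuT, hρΓu]
  -- conclude
  have hnorm2 : ‖τ‖ ^ 2 = T ^ 2 + s ^ 2 := by
    rw [hTdef, hsdef, Complex.sq_norm, Complex.normSq_apply]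
    ring
  have habs : W.re * T + W.im * s ≤ ‖W‖ * ‖τ‖ := by
    have h1 : (W * (starRingEnd ℂ) τ).re ≤ ‖W * (starRingEnd ℂ) τ‖ := Complex.re_le_norm _
    rw [norm_mul, RCLike.norm_conj] at h1
    have h2 : (W * (starRingEnd ℂ) τ).re = W.re * T + W.im * s := by
      rw [hTdef, hsdef]
      simp [Complex.mul_re, Complex.conj_re, Complex.conj_im]
    linarith [h1, h2.symm.le]
  have hτ0 : 0 < ‖τ‖ := by
    have hle : T ≤ ‖τ‖ := by
      rw [hTdef]
      exact le_trans (Complex.re_le_norm τ) (le_of_eq rfl)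
    linarith
  have hfin : (c - ρ) * ‖τ‖ / 2 * ‖τ‖ ≤ ‖W‖ * ‖τ‖ := by
    calc (c - ρ) * ‖τ‖ / 2 * ‖τ‖ = (c - ρ) * (‖τ‖ ^ 2) / 2 := by ring
      _ = (c - ρ) * (T ^ 2 + s ^ 2) / 2 := by rw [hnorm2]
      _ = (c - ρ) * (T ^ 2 + u ^ 2) / 2 := by rw [hu2]
      _ ≤ W.re * T + W.im * s := hkey
      _ ≤ ‖W‖ * ‖τ‖ := habs
  exact le_of_mul_le_mul_right hfin hτ0
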